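/- arXiv:2102.04396 — 3 statements merged into one kernel-verified Lean document; each statement's English description precedes it below -/
import Mathlib

section
/- Let μ_MP be the Marchenko–Pastur law with ratio r ∈ (0,∞): dμ_MP(λ) = max{1 − 1/r, 0}·δ₀(λ) + √((λ−λ⁻)(λ⁺−λ))/(2πλr)·1_{[λ⁻,λ⁺]}(λ) dλ with λ± = (1 ± √r)². Let m be the Stieltjes transform of the semicircle law. Then for any p ∈ ℂ \ [−λ⁺, −λ⁻], ∫₀^∞ x/(x+p) dμ_MP(x) = m(q)/√r, where q = −(p + 1 + r)/√r. -/
open MeasureTheory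
open scoped ENNReal NNReal

/-- The Marchenko–Pastur law with ratio `r`: an atom of mass `max{1 − 1/r, 0}` at `0`
plus the density `√((λ−λ⁻)(λ⁺−λ))/(2πλr)` on `[λ⁻, λ⁺]`, `λ± = (1 ± √r)²`. -/
noncomputable def mpMeasure (r : ℝ) : Measure ℝ :=
  ENNReal.ofReal (max (1 - 1 / r) 0) • Measure.dirac 0 +
    MeasureTheory.volume.withDensity (fun x =>
      ENNReal.ofReal
        (Set.indicator (Set.Icc ((1 - Real.sqrt r) ^ 2) ((1 + Real.sqrt r) ^ 2))
          (fun y =>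
            Real.sqrt ((y - (1 - Real.sqrt r) ^ 2) * ((1 + Real.sqrt r) ^ 2 - y)) /
              (2 * Real.pi * y * r)) x))

/-- The Stieltjes transform of the semicircle law,
`m(z) = (1/2π) ∫_{−2}^{2} √(4−y²)/(y−z) dy`. -/
noncomputable def scStieltjes (z : ℂ) : ℂ :=
  (1 / (2 * (Real.pi : ℂ))) * ∫ y in (-2 : ℝ)..2, (Real.sqrt (4 - y ^ 2) : ℂ) / ((y : ℂ) - z)

/-- For the Marchenko–Pastur law `μ_MP` with ratio `r` and any
`p ∈ ℂ \ [−λ⁺, −λ⁻]`, one has `∫ x/(x+p) dμ_MP(x) = m(q)/√r` with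
`q = −(p+1+r)/√r`. -/
theorem stmt_10 (r : ℝ) (hr : 0 < r) (p : ℂ)
    (hp : ¬(p.im = 0 ∧ -((1 + Real.sqrt r) ^ 2) ≤ p.re ∧ p.re ≤ -((1 - Real.sqrt r) ^ 2))) :
    ∫ x : ℝ, (x : ℂ) / ((x : ℂ) + p) ∂(mpMeasure r)
      = scStieltjes (-(p + 1 + (r : ℂ)) / (Real.sqrt r : ℂ)) / (Real.sqrt r : ℂ) := by
  have hπ : (0:ℝ) < Real.pi := Real.pi_pos
  rw [mpMeasure]
  have hs0 : 0 < Real.sqrt r := Real.sqrt_pos.2 hr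
  set s := Real.sqrt r with hsdef
  have hs2 : s ^ 2 = r := Real.sq_sqrt hr.le
  set lm := (1 - s) ^ 2 with hlmdef
  set lp := (1 + s) ^ 2 with hlpdef
  have hlm0 : (0:ℝ) ≤ lm := sq_nonneg _
  have hle : lm ≤ lp := by nlinarith
  set q : ℂ := -(p + 1 + (r:ℂ)) / (s:ℂ) with hqdef
  set f : ℝ → ℂ := fun x => (x:ℂ) / ((x:ℂ) + p) with hfdef
  have hfmeas : Measurable f := by fun_prop
  have hsne : (s:ℂ) ≠ 0 := by exact_mod_cast hs0.ne'
  have hπC : (Real.pi:ℂ) ≠ 0 := by exact_mod_cast Real.pi_ne_zero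
  have hrC0 : (r:ℂ) ≠ 0 := by exact_mod_cast hr.ne'
  -- nonvanishing of x + p on [lm, lp]
  have hpx : ∀ x ∈ Set.Icc lm lp, (x:ℂ) + p ≠ 0 := by
    intro x hx h0
    apply hp
    have him : p.im = 0 := by
      have := congrArg Complex.im h0; simpa using this
    have hre : x + p.re = 0 := by
      have := congrArg Complex.re h0; simpa using this
    exact ⟨him, by constructor <;> [linarith [hx.2]; linarith [hx.1]]⟩
  set h : ℝ → ℝ := fun y =>
    Real.sqrt ((y - lm) * (lp - y)) / (2 * Real.pi * y * r) with hhdef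
  set F : ℝ → ℂ := fun x =>
    ((Real.sqrt ((x - lm) * (lp - x)) : ℂ) / (2 * Real.pi * r)) * ((x:ℂ) + p)⁻¹ with hFdef
  -- pointwise identity on [lm, lp]
  have hkey : ∀ x ∈ Set.Icc lm lp, h x • f x = F x := by
    intro x hx
    by_cases hx0 : x = 0
    · subst hx0
      have hlm00 : lm = 0 := le_antisymm hx.1 hlm0
      simp [hhdef, hFdef, hfdef, hlm00]
    · have hxp := hpx x hx
      have hxC : (x:ℂ) ≠ 0 := by exact_mod_cast hx0
      simp only [hhdef, hfdef, hFdef, Complex.real_smul]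
      push_cast
      have hne1 : 2 * (Real.pi:ℂ) * (x:ℂ) * (r:ℂ) * ((x:ℂ) + p) ≠ 0 :=
        mul_ne_zero (mul_ne_zero (mul_ne_zero (mul_ne_zero two_ne_zero hπC) hxC) hrC0) hxp
      have hne2 : 2 * (Real.pi:ℂ) * (r:ℂ) * ((x:ℂ) + p) ≠ 0 :=
        mul_ne_zero (mul_ne_zero (mul_ne_zero two_ne_zero hπC) hrC0) hxp
      rw [div_mul_div_comm, ← div_eq_mul_inv, div_div, div_eq_div_iff hne1 hne2]
      ring
  have hmeash : Measurable fun x => (Set.indicator (Set.Icc lm lp) h x).toNNReal := by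
    apply Measurable.real_toNNReal
    apply Measurable.indicator _ measurableSet_Icc
    fun_prop
  have hFcont : ContinuousOn F (Set.Icc lm lp) := by
    apply ContinuousOn.mul
    · apply Continuous.continuousOn
      fun_prop
    · exact ContinuousOn.inv₀ (by fun_prop) hpx
  have hIntF : IntegrableOn F (Set.Icc lm lp) := hFcont.integrableOn_compact isCompact_Icc
  have hIntOn : IntegrableOn (fun x => h x • f x) (Set.Icc lm lp) :=
    hIntF.congr_fun (fun x hx => (hkey x hx).symm) measurableSet_Icc
  have hwd : (MeasureTheory.volume.withDensity fun x =>
      ENNReal.ofReal (Set.indicator (Set.Icc lm lp) h x))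
      = MeasureTheory.volume.withDensity fun x =>
        ((Set.indicator (Set.Icc lm lp) h x).toNNReal : ℝ≥0∞) := rfl
  have hind : (fun x => (Set.indicator (Set.Icc lm lp) h x).toNNReal • f x)
      = Set.indicator (Set.Icc lm lp) (fun x => h x • f x) := by
    funext x
    by_cases hx : x ∈ Set.Icc lm lp
    · have hxnn : (0:ℝ) ≤ x := le_trans hlm0 hx.1
      have h0 : 0 ≤ h x := by
        simp only [hhdef]
        exact div_nonneg (Real.sqrt_nonneg _)
          (mul_nonneg (mul_nonneg (by positivity) hxnn) hr.le)
      simp [Set.indicator_of_mem hx, NNReal.smul_def, Real.coe_toNNReal _ h0]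
    · simp [Set.indicator_of_notMem hx]
  have hI2 : Integrable f (MeasureTheory.volume.withDensity fun x =>
      ENNReal.ofReal (Set.indicator (Set.Icc lm lp) h x)) := by
    rw [hwd, integrable_withDensity_iff_integrable_smul hmeash]
    rw [hind]
    exact (integrable_indicator_iff measurableSet_Icc).2 hIntOn
  have hI1 : Integrable f
      ((ENNReal.ofReal (max (1 - 1 / r) 0)) • Measure.dirac (0:ℝ)) := by
    refine Integrable.smul_measure ?_ ENNReal.ofReal_ne_top
    refine ⟨hfmeas.aestronglyMeasurable, ?_⟩
    rw [HasFiniteIntegral, lintegral_dirac' _ (by fun_prop)]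
    simp
  rw [integral_add_measure hI1 hI2]
  have hd0 : ∫ x, f x ∂((ENNReal.ofReal (max (1 - 1 / r) 0)) • Measure.dirac (0:ℝ)) = 0 := by
    rw [integral_smul_measure, integral_dirac]
    simp [hfdef]
  rw [hd0, zero_add, hwd, integral_withDensity_eq_integral_smul hmeash]
  rw [hind, integral_indicator measurableSet_Icc]
  rw [setIntegral_congr_fun measurableSet_Icc hkey]
  rw [integral_Icc_eq_integral_Ioc, ← intervalIntegral.integral_of_le hle]
  -- change of variables
  have hsub : ∫ y in (-2:ℝ)..2, F (s * y + (1 + r))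
      = s⁻¹ • ∫ x in (s * (-2) + (1 + r))..(s * 2 + (1 + r)), F x :=
    intervalIntegral.integral_comp_mul_add F hs0.ne' (1 + r)
  have hbl : s * (-2) + (1 + r) = lm := by rw [hlmdef, ← hs2]; ring
  have hbu : s * 2 + (1 + r) = lp := by rw [hlpdef, ← hs2]; ring
  rw [hbl, hbu] at hsub
  have hIeq : ∫ x in lm..lp, F x = s • ∫ y in (-2:ℝ)..2, F (s * y + (1 + r)) := by
    rw [hsub, smul_smul, mul_inv_cancel₀ hs0.ne', one_smul]
  rw [hIeq]
  -- evaluate F along the substitution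
  have hFy : ∀ y : ℝ, F (s * y + (1 + r))
      = (2 * (Real.pi:ℂ) * r)⁻¹ * ((Real.sqrt (4 - y ^ 2) : ℂ) / ((y:ℂ) - q)) := by
    intro y
    have hsq : (s * y + (1 + r) - lm) * (lp - (s * y + (1 + r))) = s ^ 2 * (4 - y ^ 2) := by
      rw [hlmdef, hlpdef, ← hs2]; ring
    have hsqrt : Real.sqrt ((s * y + (1 + r) - lm) * (lp - (s * y + (1 + r))))
        = s * Real.sqrt (4 - y ^ 2) := by
      rw [hsq, Real.sqrt_mul (sq_nonneg s), Real.sqrt_sq hs0.le]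
    have hden : ((s * y + (1 + r) : ℝ) : ℂ) + p = (s:ℂ) * ((y:ℂ) - q) := by
      rw [hqdef]
      field_simp
      push_cast
      ring
    rw [hFdef]
    simp only
    rw [hsqrt, hden, mul_inv]
    push_cast
    calc ((s:ℂ) * (Real.sqrt (4 - y ^ 2) : ℂ)) / (2 * (Real.pi:ℂ) * r) *
          (((s:ℂ))⁻¹ * (((y:ℂ) - q))⁻¹)
        = ((s:ℂ) * ((s:ℂ))⁻¹) *
            ((Real.sqrt (4 - y ^ 2) : ℂ) / (2 * (Real.pi:ℂ) * r) * (((y:ℂ) - q))⁻¹) := by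
          ring
      _ = (2 * (Real.pi:ℂ) * r)⁻¹ * ((Real.sqrt (4 - y ^ 2) : ℂ) / ((y:ℂ) - q)) := by
          rw [mul_inv_cancel₀ hsne, one_mul, div_eq_mul_inv, div_eq_mul_inv]; ring
  rw [intervalIntegral.integral_congr (fun y _ => hFy y)]
  rw [intervalIntegral.integral_const_mul]
  rw [scStieltjes, Complex.real_smul]
  have hrC : (r:ℂ) = (s:ℂ) ^ 2 := by exact_mod_cast hs2.symm
  rw [hrC]
  field_simp
end

section
/- Fix r > 0 and stepsize 0 < γ < 2/r, and set ϱ = ((1+r)/2)(1 − rγ/2) and ω = (1/4)(1 − rγ/2)²(8/γ − (1+r)²). If ω < 0, then ϱ + √|ω| ≤ (1−√r)², with equality if and only if γ = γ* := 2/(√r(r − √r + 1)). -/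
set_option maxHeartbeats 1000000 in
/-- For `0 < γ < 2/r`, set `ϱ = ((1+r)/2)(1 − rγ/2)` and
`ω = (1/4)(1 − rγ/2)²(8/γ − (1+r)²)`. If `ω < 0` then `ϱ + √|ω| ≤ (1−√r)²`, with
equality iff `γ = γ* = 2/(√r(r − √r + 1))`. -/
theorem stmt_11 (r γ : ℝ) (hr : 0 < r) (hγ0 : 0 < γ) (hγ : γ < 2 / r)
    (ϱ ω : ℝ)
    (hϱ : ϱ = (1 + r) / 2 * (1 - r * γ / 2))
    (hω : ω = 1 / 4 * (1 - r * γ / 2) ^ 2 * (8 / γ - (1 + r) ^ 2))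
    (hneg : ω < 0) :
    ϱ + Real.sqrt |ω| ≤ (1 - Real.sqrt r) ^ 2 ∧
      (ϱ + Real.sqrt |ω| = (1 - Real.sqrt r) ^ 2 ↔
        γ = 2 / (Real.sqrt r * (r - Real.sqrt r + 1))) := by
  have hγne : (γ:ℝ) ≠ 0 := ne_of_gt hγ0
  have hs0 : 0 < Real.sqrt r := Real.sqrt_pos.2 hr
  have hs2 : Real.sqrt r ^ 2 = r := Real.sq_sqrt hr.le
  set s := Real.sqrt r with hsdef
  have hc : 0 < 1 - r * γ / 2 := by
    have h1 : γ * r < 2 := (lt_div_iff₀ hr).mp hγ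
    nlinarith
  have h8pos : 0 < 8 / γ := by positivity
  rw [hω] at hneg
  have h8 : 8 / γ < (1 + r) ^ 2 := by nlinarith [mul_pos hc hc]
  set x := Real.sqrt ((1 + r) ^ 2 - 8 / γ) with hxdef
  have hx0 : 0 ≤ x := Real.sqrt_nonneg _
  have hx2 : x ^ 2 = (1 + r) ^ 2 - 8 / γ := Real.sq_sqrt (by linarith)
  have hγx : γ * x ^ 2 = γ * (1 + r) ^ 2 - 8 := by
    rw [hx2]; field_simp
  have hxlt : x < 1 + r := by nlinarith [hx0, hx2, h8pos, hr]
  have hsqrt : Real.sqrt |ω| = (1 - r * γ / 2) / 2 * x := by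
    have h1 : |ω| = ((1 - r * γ / 2) / 2 * x) ^ 2 := by
      rw [abs_of_neg (by rw [hω]; exact hneg), hω]
      linear_combination (-(1 - r * γ / 2) ^ 2 / 4) * hx2
    rw [h1, Real.sqrt_sq (by positivity)]
  rw [hsqrt]
  have hkey : 2 * γ * (1 + r - x) * ((1 - s) ^ 2 - (ϱ + (1 - r * γ / 2) / 2 * x))
      = γ * (x - (1 - s) ^ 2) ^ 2 := by
    linear_combination (-2 * γ * (1 + r - x)) * hϱ + (-(r * γ) / 2) * hγx +
      (-γ * (4 - 4 * s + s ^ 2 - r)) * hs2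
  have hfac : 0 < 2 * γ * (1 + r - x) := by
    have h1 : 0 < 1 + r - x := by linarith
    positivity
  have hden : 0 < s * (r - s + 1) := by
    have : 0 < r - s + 1 := by nlinarith [sq_nonneg (s - 1)]
    positivity
  have hineq : ϱ + (1 - r * γ / 2) / 2 * x ≤ (1 - s) ^ 2 := by
    have h1 : (0:ℝ) ≤ γ * (x - (1 - s) ^ 2) ^ 2 := by positivity
    rw [← hkey] at h1
    have h2 := (mul_nonneg_iff_of_pos_left hfac).1 h1
    linarith
  refine ⟨hineq, ?_, ?_⟩
  · intro heq
    have h0 : γ * (x - (1 - s) ^ 2) ^ 2 = 0 := by rw [← hkey, heq]; ring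
    have h1 : (x - (1 - s) ^ 2) ^ 2 = 0 := by
      rcases mul_eq_zero.1 h0 with h | h
      · exact absurd h hγne
      · exact h
    have hxE : x = (1 - s) ^ 2 := by
      have := pow_eq_zero_iff (n := 2) (by norm_num) |>.1 h1
      linarith
    have hγE : γ * ((1 - s) ^ 2) ^ 2 = γ * (1 + r) ^ 2 - 8 := by
      rw [← hxE]; exact hγx
    rw [eq_div_iff (ne_of_gt hden)]
    linear_combination (-1 / 4) * hγE +
      (γ * (r / 4 - s + 1 / 2 + s ^ 2 / 4)) * hs2
  · intro hγeq
    have h8γ : 8 / γ = 4 * (s * (r - s + 1)) := by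
      rw [hγeq]
      field_simp
      ring
    have hx2' : x ^ 2 = ((1 - s) ^ 2) ^ 2 := by
      rw [hx2, h8γ]
      linear_combination (-(r + 2 - 4 * s + s ^ 2)) * hs2
    have hE0 : (0:ℝ) ≤ (1 - s) ^ 2 := sq_nonneg _
    have hxE : x = (1 - s) ^ 2 := by
      have h0 : (x - (1 - s) ^ 2) * (x + (1 - s) ^ 2) = 0 := by
        linear_combination hx2'
      rcases mul_eq_zero.1 h0 with h | h
      · linarith
      · linarith
    have h0 : 2 * γ * (1 + r - x) * ((1 - s) ^ 2 - (ϱ + (1 - r * γ / 2) / 2 * x)) = 0 := by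
      rw [hkey, hxE]; ring
    rcases mul_eq_zero.1 h0 with h | h
    · exact absurd h (ne_of_gt hfac)
    · linarith
end

section
/- Fix γ > 0 and λ⁻ > 0, and let ψ₀ solve the Volterra equation ψ₀(t) = z(t) + ∫₀^t γ²r h₂(t−s) ψ₀(s) ds where h₂(t) = ∫ x² e^{−2γtx} dμ(x) and μ is compactly supported in [λ⁻, ∞) away from 0 (Dirac mass at 0 allowed). If γ* < γ < (2/r)(∫x dμ)^{−1} where γ* = (r/2 · ∫ x²/(x−λ⁻) dμ(x))^{−1}, then there exists a unique λ* ∈ (0, λ⁻) solving rγ² ∫₀^∞ e^{2γλ*t} h₂(t) dt = 1, equivalently (r/2)∫₀^∞ x²/(x−λ*) dμ(x) = 1/γ. -/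
open MeasureTheory

set_option maxHeartbeats 1000000
open MeasureTheory Set Filter


lemma aux_exp_int {b : ℝ} (hb : 0 < b) :
    ∫ t in Set.Ioi (0:ℝ), Real.exp (-(b*t)) = 1/b := by
  have h := integral_Ioi_of_hasDerivAt_of_tendsto' (a := (0:ℝ))
      (f := fun t => -Real.exp (-(b*t)) / b) (f' := fun t => Real.exp (-(b*t)))
      (m := 0) ?_ ?_ ?_
  · rw [h]; simp [div_eq_mul_inv]
  · intro x _
    have h2 : HasDerivAt (fun t => Real.exp (-(b*t))) (Real.exp (-(b*x)) * (-b)) x := by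
      have h1 : HasDerivAt (fun t : ℝ => -(b*t)) (-b) x := by
        simpa [Pi.neg_def] using ((hasDerivAt_id x).const_mul b).neg
      exact (Real.hasDerivAt_exp _).comp x h1
    have h3 : HasDerivAt (fun t => -Real.exp (-(b*t)) / b) (-(Real.exp (-(b*x)) * (-b)) / b) x :=
      (h2.neg).div_const b
    refine h3.congr_deriv ?_
    rw [mul_neg, neg_neg, mul_div_assoc, div_self hb.ne', mul_one]
  · have h4 := exp_neg_integrableOn_Ioi (0:ℝ) hb
    refine h4.congr_fun ?_ measurableSet_Ioi
    intro x _; ring_nf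
  · have h5 : Tendsto (fun t : ℝ => -(b*t)) atTop atBot := by
      exact tendsto_neg_atBot_iff.mpr (Tendsto.const_mul_atTop hb tendsto_id)
    have h6 : Tendsto (fun t : ℝ => Real.exp (-(b*t))) atTop (nhds 0) :=
      Real.tendsto_exp_atBot.comp h5
    simpa using (h6.neg).div_const b

lemma aux_g_nonneg {lamMinus B α x : ℝ} (hα : α < lamMinus)
    (hx : x = 0 ∨ (lamMinus ≤ x ∧ x ≤ B)) : 0 ≤ x ^ 2 / (x - α) := by
  rcases hx with rfl | ⟨h1, h2⟩
  · simp
  · have : 0 < x - α := by linarith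
    positivity

lemma aux_g_le {lamMinus B α x : ℝ} (hlam : 0 < lamMinus) (hα : α < lamMinus)
    (hx : x = 0 ∨ (lamMinus ≤ x ∧ x ≤ B)) :
    x ^ 2 / (x - α) ≤ B ^ 2 / (lamMinus - α) := by
  have h3 : 0 < lamMinus - α := by linarith
  rcases hx with rfl | ⟨h1, h2⟩
  · simp only [ne_eq, OfNat.ofNat_ne_zero, not_false_eq_true, zero_pow, zero_div]
    exact div_nonneg (by positivity) h3.le
  · have h4 : lamMinus - α ≤ x - α := by linarith
    have h5 : x ^ 2 ≤ B ^ 2 := by nlinarith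
    calc x ^ 2 / (x - α) ≤ x ^ 2 / (lamMinus - α) := by
          apply div_le_div_of_nonneg_left (by positivity) h3 h4
      _ ≤ B ^ 2 / (lamMinus - α) := by
          apply div_le_div_of_nonneg_right h5 h3.le

lemma aux_g_mono {lamMinus B α β x : ℝ} (hαβ : α ≤ β) (hβ : β < lamMinus)
    (hx : x = 0 ∨ (lamMinus ≤ x ∧ x ≤ B)) :
    x ^ 2 / (x - α) ≤ x ^ 2 / (x - β) := by
  rcases hx with rfl | ⟨h1, h2⟩
  · simp
  · apply div_le_div_of_nonneg_left (by positivity) (by linarith) (by linarith)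

lemma aux_g_meas (α : ℝ) : Measurable fun x : ℝ => x ^ 2 / (x - α) :=
  (measurable_id.pow_const 2).div (measurable_id.sub_const α)

lemma aux_integrable {μ : Measure ℝ} [IsProbabilityMeasure μ] {lamMinus B α : ℝ}
    (hlam : 0 < lamMinus) (hα : α < lamMinus)
    (hsupp : ∀ᵐ x ∂μ, x = 0 ∨ (lamMinus ≤ x ∧ x ≤ B)) :
    Integrable (fun x => x ^ 2 / (x - α)) μ := by
  refine Integrable.mono' (integrable_const (B ^ 2 / (lamMinus - α)))
    (aux_g_meas α).aestronglyMeasurable ?_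
  filter_upwards [hsupp] with x hx
  rw [Real.norm_eq_abs, abs_le]
  exact ⟨by linarith [aux_g_nonneg hα hx, aux_g_le hlam hα hx],
    aux_g_le hlam hα hx⟩

lemma aux_mass_Icc {μ : Measure ℝ} [IsProbabilityMeasure μ] {lamMinus B : ℝ}
    (hmass : 0 < μ (Set.Ici lamMinus)) (hB : μ (Set.Ioi B) = 0) :
    0 < μ (Set.Icc lamMinus B) := by
  have h1 : Set.Ici lamMinus ⊆ Set.Icc lamMinus B ∪ Set.Ioi B := by
    intro x hx
    rcases le_or_gt x B with h | h
    · exact Or.inl ⟨hx, h⟩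
    · exact Or.inr h
  have h2 : μ (Set.Ici lamMinus) ≤ μ (Set.Icc lamMinus B) + μ (Set.Ioi B) :=
    (measure_mono h1).trans (measure_union_le _ _)
  rw [hB, add_zero] at h2
  exact lt_of_lt_of_le hmass h2

lemma aux_strict_mono {μ : Measure ℝ} [IsProbabilityMeasure μ] {lamMinus B α β : ℝ}
    (hlam : 0 < lamMinus) (hα : 0 ≤ α) (hαβ : α < β) (hβ : β < lamMinus)
    (hsupp : ∀ᵐ x ∂μ, x = 0 ∨ (lamMinus ≤ x ∧ x ≤ B))
    (hmass : 0 < μ (Set.Ici lamMinus)) (hB : μ (Set.Ioi B) = 0) :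
    (∫ x, x ^ 2 / (x - α) ∂μ) < ∫ x, x ^ 2 / (x - β) ∂μ := by
  have hBlam : lamMinus ≤ B := by
    by_contra h
    push_neg at h
    have : Set.Ici lamMinus ⊆ Set.Ioi B := fun x hx => lt_of_lt_of_le h hx
    have h3 : μ (Set.Ici lamMinus) ≤ 0 := (measure_mono this).trans hB.le
    exact absurd (le_antisymm h3 (zero_le')) hmass.ne'
  have hBpos : 0 < B := lt_of_lt_of_le hlam hBlam
  set δ : ℝ := lamMinus ^ 2 * (β - α) / B ^ 2 with hδ
  have hδpos : 0 < δ := by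
    rw [hδ]
    apply div_pos (by nlinarith [sq_nonneg lamMinus, mul_pos (mul_pos hlam hlam) (show (0:ℝ) < β - α by linarith)]) (by positivity)
  have hIα := aux_integrable hlam (hαβ.trans hβ) hsupp
  have hIβ := aux_integrable hlam hβ hsupp
  have hind : Integrable ((Set.Icc lamMinus B).indicator fun _ => δ) μ :=
    (integrable_const δ).indicator measurableSet_Icc
  have hpt : ∀ᵐ x ∂μ, (Set.Icc lamMinus B).indicator (fun _ => δ) x
      ≤ x ^ 2 / (x - β) - x ^ 2 / (x - α) := by
    filter_upwards [hsupp] with x hx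
    rcases hx with rfl | ⟨h1, h2⟩
    · rw [Set.indicator_of_notMem (by simp; intro h; linarith)]
      simp
    · rw [Set.indicator_of_mem (Set.mem_Icc.mpr ⟨h1, h2⟩)]
      have hxβ : 0 < x - β := by linarith
      have hxα : 0 < x - α := by linarith
      have heq : x ^ 2 / (x - β) - x ^ 2 / (x - α)
          = x ^ 2 * (β - α) / ((x - β) * (x - α)) := by
        field_simp
        ring
      rw [heq, hδ, div_le_div_iff₀ (by positivity) (by positivity)]
      have e1 : (x - β) * (x - α) ≤ B * B :=
        mul_le_mul (by linarith) (by linarith) hxα.le hBpos.le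
      have e2 : lamMinus ^ 2 ≤ x ^ 2 := by nlinarith
      have e3 : 0 < (x - β) * (x - α) := mul_pos hxβ hxα
      nlinarith [mul_le_mul_of_nonneg_left e1 (mul_nonneg (sq_nonneg lamMinus) (by linarith : (0:ℝ) ≤ β - α)),
        mul_le_mul_of_nonneg_right e2 (mul_nonneg (by linarith : (0:ℝ) ≤ β - α) (mul_nonneg hBpos.le hBpos.le))]
  have h4 : ∫ x, (Set.Icc lamMinus B).indicator (fun _ => δ) x ∂μ
      ≤ ∫ x, (x ^ 2 / (x - β) - x ^ 2 / (x - α)) ∂μ :=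
    integral_mono_ae hind (hIβ.sub hIα) hpt
  rw [integral_sub hIβ hIα] at h4
  rw [integral_indicator_const _ measurableSet_Icc] at h4
  have h5 : 0 < μ.real (Set.Icc lamMinus B) :=
    ENNReal.toReal_pos (aux_mass_Icc hmass hB).ne' (measure_ne_top μ _)
  have h6 : 0 < μ.real (Set.Icc lamMinus B) • δ := by
    rw [smul_eq_mul]; positivity
  linarith

lemma aux_continuousOn {μ : Measure ℝ} [IsProbabilityMeasure μ] {lamMinus B α₀ : ℝ}
    (hlam : 0 < lamMinus) (hα₀ : α₀ < lamMinus)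
    (hsupp : ∀ᵐ x ∂μ, x = 0 ∨ (lamMinus ≤ x ∧ x ≤ B)) :
    ContinuousOn (fun α => ∫ x, x ^ 2 / (x - α) ∂μ) (Set.Icc 0 α₀) := by
  apply continuousOn_of_dominated (bound := fun _ => B ^ 2 / (lamMinus - α₀))
  · exact fun α _ => (aux_g_meas α).aestronglyMeasurable
  · intro α hα
    filter_upwards [hsupp] with x hx
    have hαlt : α < lamMinus := lt_of_le_of_lt hα.2 hα₀
    rw [Real.norm_eq_abs, abs_of_nonneg (aux_g_nonneg hαlt hx)]
    calc x ^ 2 / (x - α) ≤ B ^ 2 / (lamMinus - α) := aux_g_le hlam hαlt hx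
      _ ≤ B ^ 2 / (lamMinus - α₀) := by
        apply div_le_div_of_nonneg_left (by positivity) (by linarith) (by linarith [hα.2])
  · exact integrable_const _
  · filter_upwards [hsupp] with x hx
    rcases hx with rfl | ⟨h1, h2⟩
    · have : (fun α : ℝ => (0:ℝ) ^ 2 / (0 - α)) = fun _ => (0:ℝ) := by
        funext α; simp
      rw [this]
      exact continuousOn_const
    · apply ContinuousOn.div continuousOn_const
        ((continuous_const.sub continuous_id).continuousOn)
      intro α hα
      rcases hα with ⟨-, h4⟩
      have h5 : 0 < x - α := by linarith
      exact h5.ne'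

lemma aux_fubini {μ : Measure ℝ} [IsProbabilityMeasure μ] {lamMinus B lam γ : ℝ}
    (hγ : 0 < γ) (hlam0 : 0 < lam) (hlamlt : lam < lamMinus) (hlamM : 0 < lamMinus)
    (hB : 0 < B)
    (hsupp : ∀ᵐ x ∂μ, x = 0 ∨ (lamMinus ≤ x ∧ x ≤ B)) :
    ∫ t in Set.Ioi (0:ℝ), Real.exp (2*γ*lam*t) * ∫ x, x ^ 2 * Real.exp (-(2*γ*t*x)) ∂μ
      = (∫ x, x ^ 2 / (x - lam) ∂μ) / (2*γ) := by
  set Φ : ℝ → ℝ → ℝ := fun t x => x ^ 2 * Real.exp (2*γ*t*(lam - x)) with hΦ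
  have hΦm : Measurable (Function.uncurry Φ) := by
    apply Measurable.mul
    · exact (measurable_snd.pow_const 2)
    · exact (Real.measurable_exp.comp (by fun_prop))
  have hΦnn : ∀ t x, 0 ≤ Φ t x := fun t x => by positivity
  set I : ℝ → ENNReal := fun t => ∫⁻ x, ENNReal.ofReal (Φ t x) ∂μ with hI
  have hImeas : Measurable I := Measurable.lintegral_prod_right' hΦm.ennreal_ofReal
  have hIfin : ∀ t ∈ Set.Ioi (0:ℝ), I t ≤ ENNReal.ofReal (B ^ 2) := by
    intro t ht
    have : I t ≤ ∫⁻ _, ENNReal.ofReal (B ^ 2) ∂μ := by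
      apply lintegral_mono_ae
      filter_upwards [hsupp] with x hx
      apply ENNReal.ofReal_le_ofReal
      rcases hx with rfl | ⟨h1, h2⟩
      · simp [hΦ]; positivity
      · have he : Real.exp (2*γ*t*(lam - x)) ≤ 1 := by
          rw [Real.exp_le_one_iff]
          have h0t : 0 < t := ht
          have h3 : 0 < x - lam := by linarith
          nlinarith [mul_pos (mul_pos hγ h0t) h3]
        have : x ^ 2 ≤ B ^ 2 := by nlinarith
        calc Φ t x ≤ x ^ 2 * 1 := by
              apply mul_le_mul_of_nonneg_left he (by positivity)
          _ ≤ B ^ 2 := by linarith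
    simpa using this
  have step1 : ∀ t, Real.exp (2*γ*lam*t) * (∫ x, x ^ 2 * Real.exp (-(2*γ*t*x)) ∂μ)
      = ∫ x, Φ t x ∂μ := by
    intro t
    rw [← integral_const_mul]
    apply integral_congr_ae
    apply Filter.Eventually.of_forall
    intro x
    show Real.exp (2*γ*lam*t) * (x ^ 2 * Real.exp (-(2*γ*t*x))) = x ^ 2 * Real.exp (2*γ*t*(lam - x))
    rw [show Real.exp (2*γ*lam*t) * (x ^ 2 * Real.exp (-(2*γ*t*x)))
        = x ^ 2 * (Real.exp (2*γ*lam*t) * Real.exp (-(2*γ*t*x))) by ring, ← Real.exp_add]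
    congr 2
    ring
  have step3 : ∀ t, ∫ x, Φ t x ∂μ = (I t).toReal := by
    intro t
    rw [hI]
    exact integral_eq_lintegral_of_nonneg_ae (Filter.Eventually.of_forall (hΦnn t))
      ((hΦm.comp (measurable_prodMk_left (α := ℝ))).aestronglyMeasurable)
  have step6 : ∫ t in Set.Ioi (0:ℝ), Real.exp (2*γ*lam*t) * ∫ x, x ^ 2 * Real.exp (-(2*γ*t*x)) ∂μ
      = (∫⁻ t in Set.Ioi (0:ℝ), I t).toReal := by
    rw [show (fun t => Real.exp (2*γ*lam*t) * ∫ x, x ^ 2 * Real.exp (-(2*γ*t*x)) ∂μ)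
        = fun t => (I t).toReal from funext fun t => (step1 t).trans (step3 t)]
    rw [integral_eq_lintegral_of_nonneg_ae
      (Filter.Eventually.of_forall fun t => ENNReal.toReal_nonneg)
      hImeas.ennreal_toReal.aestronglyMeasurable]
    congr 1
    apply lintegral_congr_ae
    filter_upwards [ae_restrict_mem measurableSet_Ioi] with t ht
    exact ENNReal.ofReal_toReal (lt_of_le_of_lt (hIfin t ht) ENNReal.ofReal_lt_top).ne
  have step7 : ∫⁻ t in Set.Ioi (0:ℝ), I t
      = ∫⁻ x, (∫⁻ t in Set.Ioi (0:ℝ), ENNReal.ofReal (Φ t x)) ∂μ :=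
    lintegral_lintegral_swap hΦm.ennreal_ofReal.aemeasurable
  have step8 : ∀ᵐ x ∂μ, (∫⁻ t in Set.Ioi (0:ℝ), ENNReal.ofReal (Φ t x))
      = ENNReal.ofReal (x ^ 2 / (x - lam) / (2*γ)) := by
    filter_upwards [hsupp] with x hx
    rcases hx with rfl | ⟨h1, h2⟩
    · simp [hΦ]
    · obtain ⟨b, hb⟩ : ∃ b : ℝ, b = 2*γ*(x - lam) := ⟨_, rfl⟩
      have hbpos : 0 < b := by rw [hb]; nlinarith
      have hfun : ∀ t, Φ t x = x ^ 2 * Real.exp (-(b*t)) := by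
        intro t
        have he : 2*γ*t*(lam - x) = -(b*t) := by rw [hb]; ring
        simp only [hΦ, he]
      have hint : IntegrableOn (fun t => x ^ 2 * Real.exp (-(b*t))) (Set.Ioi (0:ℝ)) := by
        apply Integrable.const_mul
        exact (exp_neg_integrableOn_Ioi 0 hbpos).congr_fun (fun t _ => by ring_nf) measurableSet_Ioi
      have hval : ∫ t in Set.Ioi (0:ℝ), x ^ 2 * Real.exp (-(b*t)) = x ^ 2 * (1/b) := by
        rw [integral_const_mul, aux_exp_int hbpos]
      calc (∫⁻ t in Set.Ioi (0:ℝ), ENNReal.ofReal (Φ t x))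
          = ∫⁻ t in Set.Ioi (0:ℝ), ENNReal.ofReal (x ^ 2 * Real.exp (-(b*t))) := by
            apply lintegral_congr fun t => by rw [hfun t]
        _ = ENNReal.ofReal (∫ t in Set.Ioi (0:ℝ), x ^ 2 * Real.exp (-(b*t))) :=
            (ofReal_integral_eq_lintegral_ofReal hint
              (Filter.Eventually.of_forall fun t => by positivity)).symm
        _ = ENNReal.ofReal (x ^ 2 / (x - lam) / (2*γ)) := by
            rw [hval]
            congr 1
            rw [hb, mul_one_div, div_div]
            ring_nf
  have step9 : (∫⁻ x, (∫⁻ t in Set.Ioi (0:ℝ), ENNReal.ofReal (Φ t x)) ∂μ).toReal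
      = (∫ x, x ^ 2 / (x - lam) ∂μ) / (2*γ) := by
    rw [lintegral_congr_ae step8]
    have hnn : 0 ≤ ∫ x, x ^ 2 / (x - lam) / (2*γ) ∂μ := by
      apply integral_nonneg_of_ae
      filter_upwards [hsupp] with x hx
      exact div_nonneg (aux_g_nonneg hlamlt hx) (by positivity)
    rw [← ofReal_integral_eq_lintegral_ofReal
      ((aux_integrable hlamM hlamlt hsupp).div_const (2*γ))
      (by filter_upwards [hsupp] with x hx
          exact div_nonneg (aux_g_nonneg hlamlt hx) (by positivity))]
    rw [ENNReal.toReal_ofReal hnn, integral_div]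
  rw [step6, step7, step9]

lemma aux_exists {μ : Measure ℝ} [IsProbabilityMeasure μ] {lamMinus B r γ : ℝ}
    (hr : 0 < r) (hγ : 0 < γ) (hlam : 0 < lamMinus) (hB : 0 < B)
    (hsupp : ∀ᵐ x ∂μ, x = 0 ∨ (lamMinus ≤ x ∧ x ≤ B))
    (hmass : 0 < μ (Set.Ici lamMinus)) (hBnull : μ (Set.Ioi B) = 0)
    (hγlow : (r / 2 * ∫ x, x ^ 2 / (x - lamMinus) ∂μ)⁻¹ < γ) :
    ∃ α₀ : ℝ, 0 < α₀ ∧ α₀ < lamMinus ∧ 2/(r*γ) < ∫ x, x ^ 2 / (x - α₀) ∂μ := by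
  by_contra hcon
  push_neg at hcon
  have hc : (0:ℝ) < 2/(r*γ) := by positivity
  obtain ⟨a, ha⟩ : ∃ a : ℕ → ℝ, a = fun n : ℕ => lamMinus - lamMinus/((n:ℝ)+2) :=
    ⟨fun n : ℕ => lamMinus - lamMinus/((n:ℝ)+2), rfl⟩
  have hcast : ∀ n : ℕ, (0:ℝ) ≤ (n:ℝ) := fun n => Nat.cast_nonneg n
  have hapos : ∀ n, 0 < a n := by
    intro n; rw [ha]
    have h2 : lamMinus/((n:ℝ)+2) < lamMinus :=
      div_lt_self hlam (by linarith [hcast n])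
    simpa using by linarith
  have halt : ∀ n, a n < lamMinus := by
    intro n; rw [ha]
    have : 0 < lamMinus/((n:ℝ)+2) := by positivity
    simpa using by linarith
  have hamono : Monotone a := by
    intro m n hmn; rw [ha]
    have h3 : lamMinus/((n:ℝ)+2) ≤ lamMinus/((m:ℝ)+2) := by
      apply div_le_div_of_nonneg_left hlam.le (by positivity)
      have : (m:ℝ) ≤ (n:ℝ) := Nat.cast_le.mpr hmn
      linarith
    simpa using by linarith
  have hatend : Filter.Tendsto a Filter.atTop (nhds lamMinus) := by
    rw [ha]
    have h1 : Filter.Tendsto (fun n : ℕ => lamMinus/((n:ℝ)+2)) Filter.atTop (nhds 0) := by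
      apply Filter.Tendsto.div_atTop tendsto_const_nhds
      exact Filter.tendsto_atTop_add_const_right _ 2 tendsto_natCast_atTop_atTop
    simpa using (tendsto_const_nhds (x := lamMinus) (f := Filter.atTop)).sub h1
  have hφmono : ∀ᵐ x ∂μ, Monotone fun n => ENNReal.ofReal (x ^ 2 / (x - a n)) := by
    filter_upwards [hsupp] with x hx
    intro m n hmn
    exact ENNReal.ofReal_le_ofReal (aux_g_mono (hamono hmn) (halt n) hx)
  have key : ∫⁻ x, (⨆ n, ENNReal.ofReal (x ^ 2 / (x - a n))) ∂μ
      ≤ ENNReal.ofReal (2/(r*γ)) := by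
    rw [lintegral_iSup' (fun n => ((aux_g_meas (a n)).ennreal_ofReal).aemeasurable) hφmono]
    apply iSup_le; intro n
    rw [← ofReal_integral_eq_lintegral_ofReal (aux_integrable hlam (halt n) hsupp)
      (by filter_upwards [hsupp] with x hx; exact aux_g_nonneg (halt n) hx)]
    exact ENNReal.ofReal_le_ofReal (hcon _ (hapos n) (halt n))
  have hsing : μ {lamMinus} = 0 := by
    by_contra hne
    have h1 : ∫⁻ x in {lamMinus}, (⨆ n, ENNReal.ofReal (x ^ 2 / (x - a n))) ∂μ
        ≤ ENNReal.ofReal (2/(r*γ)) :=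
      le_trans (setLIntegral_le_lintegral _ _) key
    rw [lintegral_singleton] at h1
    have hSfin : (⨆ n, ENNReal.ofReal (lamMinus ^ 2 / (lamMinus - a n))) ≠ ⊤ := by
      intro htop
      rw [htop, ENNReal.top_mul hne, top_le_iff] at h1
      exact ENNReal.ofReal_ne_top h1
    have hterm : ∀ n : ℕ, lamMinus * ((n:ℝ)+2)
        ≤ (⨆ n, ENNReal.ofReal (lamMinus ^ 2 / (lamMinus - a n))).toReal := by
      intro n
      have h2 : ENNReal.ofReal (lamMinus ^ 2 / (lamMinus - a n))
          ≤ ⨆ n, ENNReal.ofReal (lamMinus ^ 2 / (lamMinus - a n)) :=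
        le_iSup (fun n => ENNReal.ofReal (lamMinus ^ 2 / (lamMinus - a n))) n
      have h3 : lamMinus ^ 2 / (lamMinus - a n) = lamMinus * ((n:ℝ)+2) := by
        rw [ha]
        rw [show lamMinus - (lamMinus - lamMinus/((n:ℝ)+2)) = lamMinus/((n:ℝ)+2) by ring]
        rw [div_div_eq_mul_div, pow_two, mul_div_assoc]
        field_simp [hlam.ne']
      rw [h3] at h2
      have h4 := ENNReal.toReal_mono hSfin h2
      rwa [ENNReal.toReal_ofReal (by positivity)] at h4
    obtain ⟨n, hn⟩ := exists_nat_gt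
      ((⨆ n, ENNReal.ofReal (lamMinus ^ 2 / (lamMinus - a n))).toReal / lamMinus)
    rw [div_lt_iff₀ hlam] at hn
    nlinarith [hterm n]
  have hae0 : ∀ᵐ x ∂μ, x ≠ lamMinus := by
    rw [ae_iff]
    convert hsing using 2
    ext x; simp
  have hsupEq : ∀ᵐ x ∂μ, (⨆ n, ENNReal.ofReal (x ^ 2 / (x - a n)))
      = ENNReal.ofReal (x ^ 2 / (x - lamMinus)) := by
    filter_upwards [hsupp, hae0, hφmono] with x hx hxne hmonx
    rcases hx with rfl | ⟨h1, h2⟩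
    · have h5 : ∀ n : ℕ, (0:ℝ) ^ 2 / (0 - a n) = 0 := fun n => by simp
      simp only [h5]
      simp
    · have hxgt : lamMinus < x := lt_of_le_of_ne h1 (Ne.symm hxne)
      have htend : Filter.Tendsto (fun n => ENNReal.ofReal (x ^ 2 / (x - a n)))
          Filter.atTop (nhds (ENNReal.ofReal (x ^ 2 / (x - lamMinus)))) := by
        apply (ENNReal.continuous_ofReal.tendsto _).comp
        apply Filter.Tendsto.div tendsto_const_nhds (tendsto_const_nhds.sub hatend)
        intro h0
        have : x = lamMinus := by linarith [sub_eq_zero.mp h0]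
        exact absurd this hxne
      exact tendsto_nhds_unique (tendsto_atTop_iSup hmonx) htend
  have hL : ∫⁻ x, ENNReal.ofReal (x ^ 2 / (x - lamMinus)) ∂μ
      ≤ ENNReal.ofReal (2/(r*γ)) := by
    rw [← lintegral_congr_ae hsupEq]; exact key
  have hLfin : ∫⁻ x, ENNReal.ofReal (x ^ 2 / (x - lamMinus)) ∂μ ≠ ⊤ :=
    (lt_of_le_of_lt hL ENNReal.ofReal_lt_top).ne
  have hnn : ∀ᵐ x ∂μ, 0 ≤ x ^ 2 / (x - lamMinus) := by
    filter_upwards [hsupp] with x hx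
    rcases hx with rfl | ⟨h1, h2⟩
    · simp
    · exact div_nonneg (by positivity) (by linarith)
  have hFeq : ∫ x, x ^ 2 / (x - lamMinus) ∂μ
      = (∫⁻ x, ENNReal.ofReal (x ^ 2 / (x - lamMinus)) ∂μ).toReal :=
    integral_eq_lintegral_of_nonneg_ae hnn (aux_g_meas lamMinus).aestronglyMeasurable
  have hFle : ∫ x, x ^ 2 / (x - lamMinus) ∂μ ≤ 2/(r*γ) := by
    rw [hFeq]
    calc (∫⁻ x, ENNReal.ofReal (x ^ 2 / (x - lamMinus)) ∂μ).toReal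
        ≤ (ENNReal.ofReal (2/(r*γ))).toReal := ENNReal.toReal_mono ENNReal.ofReal_ne_top hL
      _ = 2/(r*γ) := ENNReal.toReal_ofReal hc.le
  have hIoc : 0 < μ (Set.Ioc lamMinus B) := by
    have hs : Set.Ici lamMinus ⊆ ({lamMinus} ∪ Set.Ioc lamMinus B) ∪ Set.Ioi B := by
      intro x hx
      rcases eq_or_lt_of_le (Set.mem_Ici.mp hx) with h | h
      · exact Or.inl (Or.inl h.symm)
      · rcases le_or_gt x B with h' | h'
        · exact Or.inl (Or.inr ⟨h, h'⟩)
        · exact Or.inr h'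
    have h5 : μ (Set.Ici lamMinus) ≤ μ ({lamMinus} ∪ Set.Ioc lamMinus B) + μ (Set.Ioi B) :=
      (measure_mono hs).trans (measure_union_le _ _)
    have h6 : μ ({lamMinus} ∪ Set.Ioc lamMinus B) ≤ μ {lamMinus} + μ (Set.Ioc lamMinus B) :=
      measure_union_le _ _
    rw [hsing, zero_add] at h6
    rw [hBnull, add_zero] at h5
    exact lt_of_lt_of_le hmass (h5.trans h6)
  have hlow : ENNReal.ofReal (lamMinus ^ 2 / B) * μ (Set.Ioc lamMinus B)
      ≤ ∫⁻ x, ENNReal.ofReal (x ^ 2 / (x - lamMinus)) ∂μ := by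
    calc ENNReal.ofReal (lamMinus ^ 2 / B) * μ (Set.Ioc lamMinus B)
        = ∫⁻ _ in Set.Ioc lamMinus B, ENNReal.ofReal (lamMinus ^ 2 / B) ∂μ :=
          (setLIntegral_const _ _).symm
      _ ≤ ∫⁻ x in Set.Ioc lamMinus B, ENNReal.ofReal (x ^ 2 / (x - lamMinus)) ∂μ := by
          apply setLIntegral_mono (aux_g_meas lamMinus).ennreal_ofReal
          intro x hx
          apply ENNReal.ofReal_le_ofReal
          rcases hx with ⟨hx1, hx2⟩
          have e1 : 0 < x - lamMinus := by linarith
          calc lamMinus ^ 2 / B ≤ lamMinus ^ 2 / (x - lamMinus) :=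
                div_le_div_of_nonneg_left (by positivity) e1 (by linarith)
            _ ≤ x ^ 2 / (x - lamMinus) :=
                div_le_div_of_nonneg_right (by nlinarith) e1.le
      _ ≤ ∫⁻ x, ENNReal.ofReal (x ^ 2 / (x - lamMinus)) ∂μ :=
          setLIntegral_le_lintegral _ _
  have hFpos : 0 < ∫ x, x ^ 2 / (x - lamMinus) ∂μ := by
    rw [hFeq]
    apply ENNReal.toReal_pos _ hLfin
    intro h0
    rw [h0, le_zero_iff, mul_eq_zero] at hlow
    rcases hlow with h | h
    · exact absurd h (by
        have : (0:ℝ) < lamMinus ^ 2 / B := by positivity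
        simp [ENNReal.ofReal_pos.mpr this, (ENNReal.ofReal_pos.mpr this).ne'])
    · exact absurd h hIoc.ne'
  have hd : 0 < r/2 * ∫ x, x ^ 2 / (x - lamMinus) ∂μ := by
    apply mul_pos (by positivity) hFpos
  have h2 := mul_lt_mul_of_pos_right hγlow hd
  rw [inv_mul_cancel₀ hd.ne'] at h2
  have hfin : 2/(r*γ) < ∫ x, x ^ 2 / (x - lamMinus) ∂μ := by
    rw [div_lt_iff₀ (by positivity)]
    nlinarith
  linarith


/-- existence and uniqueness of the Malthusian exponent. Let `μ` be a
compactly supported probability measure supported in `{0} ∪ [λ⁻, ∞)` with `λ⁻ > 0`, and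
`h₂(t) = ∫ x² e^{−2γtx} dμ(x)`. If `γ* < γ < (2/r)(∫ x dμ)⁻¹` where
`γ* = ((r/2)∫ x²/(x−λ⁻) dμ)⁻¹`, then there is a unique `λ* ∈ (0, λ⁻)` with
`rγ² ∫₀^∞ e^{2γλ*t} h₂(t) dt = 1`, equivalently `(r/2)∫ x²/(x−λ*) dμ = 1/γ`. -/
theorem stmt_13 (μ : Measure ℝ) [IsProbabilityMeasure μ]
    (r γ lamMinus : ℝ) (hr : 0 < r) (hγ0 : 0 < γ) (hlam : 0 < lamMinus)
    (hneg : μ (Set.Iio 0) = 0) (hgap : μ (Set.Ioo 0 lamMinus) = 0)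
    (hmass : 0 < μ (Set.Ici lamMinus)) (B : ℝ) (hB : μ (Set.Ioi B) = 0)
    (h₂ : ℝ → ℝ) (hh₂ : ∀ t, h₂ t = ∫ x, x ^ 2 * Real.exp (-(2 * γ * t * x)) ∂μ)
    (hγlow : (r / 2 * ∫ x, x ^ 2 / (x - lamMinus) ∂μ)⁻¹ < γ)
    (hγhigh : γ < 2 / r * (∫ x, x ∂μ)⁻¹) :
    ∃! lamStar : ℝ, 0 < lamStar ∧ lamStar < lamMinus ∧
      r * γ ^ 2 * ∫ t in Set.Ioi (0 : ℝ), Real.exp (2 * γ * lamStar * t) * h₂ t = 1 ∧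
      r / 2 * ∫ x, x ^ 2 / (x - lamStar) ∂μ = 1 / γ := by
  have hsupp : ∀ᵐ x ∂μ, x = 0 ∨ (lamMinus ≤ x ∧ x ≤ B) := by
    have hnull : μ (Set.Iio 0 ∪ Set.Ioo 0 lamMinus ∪ Set.Ioi B) = 0 :=
      measure_union_null (measure_union_null hneg hgap) hB
    rw [ae_iff]
    apply measure_mono_null _ hnull
    intro x hx
    simp only [Set.mem_setOf_eq] at hx
    push_neg at hx
    obtain ⟨hx0, hx1⟩ := hx
    by_cases h1 : x < 0
    · exact Or.inl (Or.inl h1)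
    · by_cases h2 : x < lamMinus
      · exact Or.inl (Or.inr ⟨lt_of_le_of_ne (not_lt.mp h1) (Ne.symm hx0), h2⟩)
      · exact Or.inr (hx1 (not_lt.mp h2))
  have hBlam : lamMinus ≤ B := by
    by_contra h
    push_neg at h
    have hss : Set.Ici lamMinus ⊆ Set.Ioi B := fun x hx => lt_of_lt_of_le h hx
    have h3 : μ (Set.Ici lamMinus) ≤ 0 := (measure_mono hss).trans hB.le
    exact absurd (le_antisymm h3 (zero_le')) hmass.ne'
  have hBpos : 0 < B := lt_of_lt_of_le hlam hBlam
  have hid : Integrable (fun x => x) μ := by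
    apply Integrable.mono' (integrable_const B) measurable_id.aestronglyMeasurable
    filter_upwards [hsupp] with x hx
    rw [Real.norm_eq_abs, abs_le]
    rcases hx with rfl | ⟨h1, h2⟩
    · constructor <;> simp only [id_eq] <;> linarith
    · constructor <;> simp only [id_eq] <;> linarith
  have hF0eq : ∫ x, x ^ 2 / (x - 0) ∂μ = ∫ x, x ∂μ := by
    apply integral_congr_ae
    apply Filter.Eventually.of_forall
    intro x
    show x ^ 2 / (x - 0) = x
    rcases eq_or_ne x 0 with rfl | h
    · simp
    · rw [sub_zero, pow_two, mul_div_assoc, div_self h, mul_one]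
  have hintpos : 0 < ∫ x, x ∂μ := by
    have hind : Integrable ((Set.Icc lamMinus B).indicator fun _ => lamMinus) μ :=
      (integrable_const _).indicator measurableSet_Icc
    have hpt : ∀ᵐ x ∂μ, (Set.Icc lamMinus B).indicator (fun _ => lamMinus) x ≤ x := by
      filter_upwards [hsupp] with x hx
      rcases hx with rfl | ⟨h1, h2⟩
      · rw [Set.indicator_of_notMem (by simp; intro h; linarith)]
      · rw [Set.indicator_of_mem (Set.mem_Icc.mpr ⟨h1, h2⟩)]
        exact h1
    have h4 := integral_mono_ae hind hid hpt
    rw [integral_indicator_const _ measurableSet_Icc] at h4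
    have h5 : 0 < (μ (Set.Icc lamMinus B)).toReal :=
      ENNReal.toReal_pos (aux_mass_Icc hmass hB).ne' (measure_ne_top μ _)
    calc (0:ℝ) < (μ (Set.Icc lamMinus B)).toReal • lamMinus := by
          rw [smul_eq_mul]; exact mul_pos h5 hlam
      _ ≤ ∫ x, x ∂μ := h4
  have hF0c : ∫ x, x ^ 2 / (x - 0) ∂μ < 2/(r*γ) := by
    rw [hF0eq]
    have h2 := mul_lt_mul_of_pos_right hγhigh hintpos
    rw [mul_assoc, inv_mul_cancel₀ hintpos.ne', mul_one] at h2
    rw [lt_div_iff₀ (by positivity)]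
    have h3 : r * (2/r) = 2 := by field_simp
    nlinarith [mul_lt_mul_of_pos_left h2 hr]
  obtain ⟨α₀, hα₀pos, hα₀lt, hα₀c⟩ := aux_exists hr hγ0 hlam hBpos hsupp hmass hB hγlow
  have hcont := aux_continuousOn hlam hα₀lt hsupp
  have hIVT := intermediate_value_Icc hα₀pos.le hcont
  obtain ⟨lam, hlamIcc, hlamc⟩ := hIVT ⟨hF0c.le, hα₀c.le⟩
  simp only at hlamc
  -- hlamc : ∫ x, x ^ 2 / (x - lam) ∂μ = 2 / (r * γ)
  have hlam0 : 0 < lam := by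
    rcases eq_or_lt_of_le hlamIcc.1 with h | h
    · exfalso
      rw [← h] at hlamc
      rw [hlamc] at hF0c
      exact lt_irrefl _ hF0c
    · exact h
  have hlamlt : lam < lamMinus := lt_of_le_of_lt hlamIcc.2 hα₀lt
  have hhalf : r / 2 * ∫ x, x ^ 2 / (x - lam) ∂μ = 1 / γ := by
    rw [hlamc]
    field_simp
  have htime : r * γ ^ 2 * ∫ t in Set.Ioi (0 : ℝ), Real.exp (2 * γ * lam * t) * h₂ t = 1 := by
    have he : (fun t => Real.exp (2 * γ * lam * t) * h₂ t)
        = fun t => Real.exp (2*γ*lam*t) * ∫ x, x ^ 2 * Real.exp (-(2*γ*t*x)) ∂μ := by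
      funext t; rw [hh₂]
    rw [he, aux_fubini hγ0 hlam0 hlamlt hlam hBpos hsupp, hlamc]
    field_simp
  refine ⟨lam, ⟨hlam0, hlamlt, htime, hhalf⟩, ?_⟩
  rintro y ⟨hy0, hylt, -, hy⟩
  have hyc : ∫ x, x ^ 2 / (x - y) ∂μ = 2/(r*γ) := by
    field_simp at hy ⊢
    linarith
  rcases lt_trichotomy y lam with h | h | h
  · exfalso
    have := aux_strict_mono hlam hy0.le h hlamlt hsupp hmass hB
    rw [hyc, hlamc] at this
    exact lt_irrefl _ this
  · exact h
  · exfalso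
    have := aux_strict_mono hlam hlam0.le h hylt hsupp hmass hB
    rw [hyc, hlamc] at this
    exact lt_irrefl _ this
end
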